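/- Let p be a prime, G a finite group, H a p-subgroup of G that is an ICΦ-subgroup of G, and N a normal p'-subgroup of G (i.e., p does not divide |N|). Then HN/N is an ICΦ-subgroup of G/N. -/

import Mathlib

/-- `H` is an `ICΦ`-subgroup of `G` if `H ∩ [H,G] ≤ Φ(H)`. -/
def IsICPhi {G : Type*} [Group G] (H : Subgroup G) : Prop :=
  H ⊓ ⁅H, (⊤ : Subgroup G)⁆ ≤ (frattini ↥H).map H.subtype

open Subgroup
open scoped commutatorElement

/-- `⁅H, ⊤⁆` is a normal subgroup. -/
lemma commTop_normal {G : Type*} [Group G] (H : Subgroup G) :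
    (⁅H, (⊤ : Subgroup G)⁆).Normal := by
  constructor
  intro n hn x
  rw [Subgroup.commutator_def] at hn ⊢
  induction hn using Subgroup.closure_induction with
  | mem a ha =>
      obtain ⟨h, hh, g, -, rfl⟩ := ha
      have key : x * ⁅h, g⁆ * x⁻¹ = ⁅h, x⁆⁻¹ * ⁅h, x * g⁆ := by
        simp only [commutatorElement_def]; group
      rw [key]
      exact mul_mem (inv_mem (Subgroup.subset_closure ⟨h, hh, x, trivial, rfl⟩))
        (Subgroup.subset_closure ⟨h, hh, x * g, trivial, rfl⟩)
  | one => simpa using one_mem _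
  | mul a b _ _ ha hb =>
      have : x * (a * b) * x⁻¹ = (x * a * x⁻¹) * (x * b * x⁻¹) := by group
      rw [this]; exact mul_mem ha hb
  | inv a _ ha =>
      have : x * a⁻¹ * x⁻¹ = (x * a * x⁻¹)⁻¹ := by group
      rw [this]; exact inv_mem ha

theorem stmt4 {G : Type*} [Group G] [Finite G] (p : ℕ) (hp : p.Prime)
    (H N : Subgroup G) [N.Normal] (hH : IsPGroup p ↥H) (hIC : IsICPhi H)
    (hN : ¬ p ∣ Nat.card N) :
    IsICPhi ((H ⊔ N).map (QuotientGroup.mk' N)) := by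
  set π : G →* G ⧸ N := QuotientGroup.mk' N with hπ
  have hπsurj : Function.Surjective π := QuotientGroup.mk'_surjective N
  have hNbot : N.map π = ⊥ :=
    (Subgroup.map_eq_bot_iff _).mpr (le_of_eq (QuotientGroup.ker_mk' N).symm)
  have hK : (H ⊔ N).map π = H.map π := by
    rw [Subgroup.map_sup, hNbot, sup_bot_eq]
  rw [show ((H ⊔ N).map (QuotientGroup.mk' N)) = H.map π from hK]
  set K := H.map π with hKdef
  -- the commutator subgroup M = [H, G] is normal
  set M := ⁅H, (⊤ : Subgroup G)⁆ with hM
  have hMnorm : M.Normal := commTop_normal H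
  -- the map from H to K
  have hrange : ∀ h : ↥H, π (h : G) ∈ K := fun h => by
    exact ⟨h, h.2, rfl⟩
  set φ : ↥H →* ↥K := (π.comp H.subtype).codRestrict K (fun h => hrange h) with hφ
  have hφcoe : ∀ h : ↥H, (φ h : G ⧸ N) = π (h : G) := fun h => rfl
  -- φ is bijective
  have hφinj : Function.Injective φ := by
    intro a b hab
    have h1 : π (a : G) = π (b : G) := by rw [← hφcoe, ← hφcoe, hab]
    have h2 : (a : G)⁻¹ * b ∈ N := by
      rw [← QuotientGroup.ker_mk' N]
      simp only [MonoidHom.mem_ker, map_mul, map_inv, ← hπ, h1, inv_mul_cancel]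
    -- (a⁻¹ b) ∈ H ⊓ N, a p-group meets a p'-group trivially
    have h3 : (a : G)⁻¹ * b ∈ H := mul_mem (inv_mem a.2) b.2
    have h4 : (a⁻¹ * b : ↥H) = 1 := by
      set c : ↥H := a⁻¹ * b with hc
      obtain ⟨k, hk⟩ := hH c
      have hcN : (c : G) ∈ N := h2
      have hdvd1 : orderOf c ∣ p ^ k := orderOf_dvd_of_pow_eq_one hk
      have hdvd2 : orderOf c ∣ Nat.card N := by
        have : orderOf (⟨(c : G), hcN⟩ : ↥N) ∣ Nat.card N := orderOf_dvd_natCard _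
        rwa [orderOf_mk, Subgroup.orderOf_coe] at this
      have hcop : Nat.Coprime (p ^ k) (Nat.card N) :=
        (hp.coprime_iff_not_dvd.mpr hN).pow_left k
      have : orderOf c ∣ 1 := hcop ▸ Nat.dvd_gcd hdvd1 hdvd2
      rw [Nat.dvd_one] at this
      exact orderOf_eq_one_iff.mp this
    exact eq_of_inv_mul_eq_one h4
  have hφsurj : Function.Surjective φ := by
    intro k
    obtain ⟨h, hh, hhk⟩ := k.2
    exact ⟨⟨h, hh⟩, Subtype.ext hhk⟩
  set e : ↥H ≃* ↥K := MulEquiv.ofBijective φ ⟨hφinj, hφsurj⟩ with he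
  -- main inclusion
  intro x hx
  rw [Subgroup.mem_inf] at hx
  obtain ⟨hx1, hx2⟩ := hx
  -- x ∈ K, so x = π h for some h ∈ H
  obtain ⟨h, hh, rfl⟩ := hx1
  -- x ∈ ⁅K, ⊤⁆ = map π M
  have hcomm : ⁅K, (⊤ : Subgroup (G ⧸ N))⁆ = M.map π := by
    rw [hKdef, ← Subgroup.map_top_of_surjective π hπsurj, ← Subgroup.map_commutator]
  rw [hcomm] at hx2
  -- so h ∈ M ⊔ N
  have hMN : h ∈ M ⊔ N := by
    have : h ∈ (M.map π).comap π := hx2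
    rwa [Subgroup.comap_map_eq, QuotientGroup.ker_mk' N] at this
  -- now show h ∈ M using the quotient by M
  have hhM : h ∈ M := by
    set q : G →* G ⧸ M := QuotientGroup.mk' M with hq
    have hMq : M.map q = ⊥ :=
      (Subgroup.map_eq_bot_iff _).mpr (le_of_eq (QuotientGroup.ker_mk' M).symm)
    have hqh : q h ∈ N.map q := by
      have h5 : q h ∈ (M ⊔ N).map q := ⟨h, hMN, rfl⟩
      rwa [Subgroup.map_sup, hMq, bot_sup_eq] at h5
    obtain ⟨k, hk⟩ := hH ⟨h, hh⟩
    have hk' : h ^ (p ^ k) = 1 := by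
      have := congrArg (Subgroup.subtype H) hk
      simpa using this
    have hdvd1 : orderOf (q h) ∣ p ^ k :=
      orderOf_dvd_of_pow_eq_one (by rw [← map_pow, hk', map_one])
    have hdvd2 : orderOf (q h) ∣ Nat.card N := by
      have h1 : orderOf (⟨q h, hqh⟩ : ↥(N.map q)) ∣ Nat.card (N.map q) :=
        orderOf_dvd_natCard _
      have h2 : Nat.card (N.map q) ∣ Nat.card N :=
        Subgroup.card_dvd_of_surjective (q.subgroupMap N) (q.subgroupMap_surjective N)
      rw [orderOf_mk] at h1
      exact h1.trans h2
    have hcop : Nat.Coprime (p ^ k) (Nat.card N) :=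
      (hp.coprime_iff_not_dvd.mpr hN).pow_left k
    have h1 : orderOf (q h) ∣ 1 := hcop ▸ Nat.dvd_gcd hdvd1 hdvd2
    rw [Nat.dvd_one] at h1
    have h6 : q h = 1 := orderOf_eq_one_iff.mp h1
    exact (QuotientGroup.eq_one_iff h).mp h6
  -- apply the ICΦ hypothesis
  obtain ⟨y, hy, hyh⟩ := hIC ⟨hh, hhM⟩
  -- transport through the isomorphism e
  refine ⟨e y, ?_, ?_⟩
  · exact frattini_le_comap_frattini_of_surjective e.surjective hy
  · show ((e y : ↥K) : G ⧸ N) = π h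
    rw [← hyh]
    exact hφcoe y
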